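/- (Proposition 5, GTCN part — two layers distinguish nodes) Consider the complete graph on N ≥ 1 vertices. Let Z ∈ ℝ^{N×F} with rows z_u, and define the GTCN recursion on the complete graph by g_u(0) = z_u and g_u(m+1) = (1/N) ∑_{v ≠ u} g_v(m) + (1/N) z_u. Then after two propagation layers, g_u(2) = ((N−1)/N) c + (1/N) z_u, where c = (1/N) ∑_{v=1}^{N} z_v is the common value of g_v(1). Consequently, for any two vertices u, w with z_u ≠ z_w one has g_u(2) ≠ g_w(2); i.e., a GTCN with more than one layer learns distinguishable representations for nodes with distinct initial features. -/

import Mathlib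

open Matrix Finset

/-- Proposition 5, GTCN part — two layers distinguish nodes:
On the complete graph on `N ≥ 1` vertices, with the GTCN recursion
`g_u(0) = z_u`, `g_u(m+1) = (1/N) ∑_{v ≠ u} g_v(m) + (1/N) z_u`, after two
layers `g_u(2) = ((N-1)/N) c + (1/N) z_u` where `c = (1/N) ∑_v z_v`;
consequently nodes with distinct initial features remain distinguishable. -/
theorem gtcn_complete_graph_two_layers_distinguish
    (N F : ℕ) (hN : 1 ≤ N)
    (Z : Matrix (Fin N) (Fin F) ℝ)
    (g : ℕ → Fin N → (Fin F → ℝ))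
    (hg0 : ∀ u, g 0 u = Z u)
    (hgrec : ∀ (m : ℕ) (u : Fin N),
      g (m + 1) u =
        (N : ℝ)⁻¹ • (∑ v ∈ Finset.univ.erase u, g m v) + (N : ℝ)⁻¹ • Z u) :
    (∀ u : Fin N,
      g 2 u = (((N : ℝ) - 1) / N) • ((N : ℝ)⁻¹ • ∑ v : Fin N, Z v)
        + (N : ℝ)⁻¹ • Z u) ∧
    (∀ u w : Fin N, Z u ≠ Z w → g 2 u ≠ g 2 w) := by
  have hNne : (N : ℝ) ≠ 0 := by positivity
  have h1 : ∀ u : Fin N, g 1 u = (N : ℝ)⁻¹ • ∑ v : Fin N, Z v := by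
    intro u
    rw [hgrec 0 u]
    simp only [hg0]
    rw [← smul_add]; congr 1; exact Finset.sum_erase_add Finset.univ _ (Finset.mem_univ u)
  have h2 : ∀ u : Fin N,
      g 2 u = (((N : ℝ) - 1) / N) • ((N : ℝ)⁻¹ • ∑ v : Fin N, Z v)
        + (N : ℝ)⁻¹ • Z u := by
    intro u
    rw [hgrec 1 u]
    congr 1
    rw [Finset.sum_congr rfl (fun v _ => h1 v), Finset.sum_const,
      Finset.card_erase_of_mem (Finset.mem_univ u), Finset.card_univ,
      Fintype.card_fin, smul_smul, ← Nat.cast_smul_eq_nsmul ℝ, smul_smul]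
    rw [smul_smul]
    have hc : (N : ℝ)⁻¹ * ((N - 1 : ℕ) : ℝ) * (N : ℝ)⁻¹
        = ((N : ℝ) - 1) / N * (N : ℝ)⁻¹ := by
      rw [Nat.cast_sub hN]; push_cast; ring
    rw [hc]
  refine ⟨h2, fun u w hzw hg => hzw ?_⟩
  rw [h2 u, h2 w] at hg
  have := add_left_cancel hg
  exact smul_right_injective _ (inv_ne_zero hNne) this
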